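/- arXiv:2409.05632 — 3 statements merged into one kernel-verified Lean document; each statement's English description precedes it below -/
import Mathlib

section
/- Suppose the conditional survival function follows a Cox proportional hazards model: S(t|X) = exp(−Λ₀(t) e^{θᵀX}) with Λ₀(t) > 0. Then with link g(x) = log(−log(x)), the assumption-lean coefficient β_t^{AL} = var(X)^{-1} cov(g(S(t|X)), X) equals θ. -/
open MeasureTheory Matrix

/-- Under a Cox model S(t|X) = exp(−Λ₀(t) e^{θᵀX}) with Λ₀(t) > 0 and link
g(x) = log(−log(x)), the assumption-lean coefficient
β_t^{AL} = var(X)⁻¹ cov(g(S(t|X)), X) equals θ. -/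
theorem stmt_9 {Ω : Type*} [MeasurableSpace Ω] (μ : Measure Ω) [IsProbabilityMeasure μ]
    {d : ℕ} (X : Ω → Fin d → ℝ) (θ : Fin d → ℝ) (Λ0 : ℝ) (hΛ0 : 0 < Λ0)
    (hXm : ∀ i, Measurable fun ω => X ω i)
    (hXint : ∀ i, Integrable (fun ω => X ω i) μ)
    (hXXint : ∀ i j, Integrable (fun ω => X ω i * X ω j) μ)
    (S : Ω → ℝ) (hScox : ∀ ω, S ω = Real.exp (-(Λ0 * Real.exp (∑ i, θ i * X ω i))))
    (g : ℝ → ℝ) (hg : ∀ x, g x = Real.log (-Real.log x))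
    (μv : Fin d → ℝ) (hμv : ∀ i, μv i = ∫ ω, X ω i ∂μ)
    (Sig : Matrix (Fin d) (Fin d) ℝ)
    (hSig : ∀ i j, Sig i j = ∫ ω, (X ω i - μv i) * (X ω j - μv j) ∂μ)
    (hSiginv : IsUnit Sig.det)
    (c : Fin d → ℝ)
    (hgint : Integrable (fun ω => g (S ω)) μ)
    (hc : ∀ i, c i = ∫ ω, (g (S ω) - ∫ ω', g (S ω') ∂μ) * (X ω i - μv i) ∂μ) :
    Sig⁻¹ *ᵥ c = θ := by
  -- g (S ω) = log Λ0 + ∑ θ i * X ω i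
  have hgS : ∀ ω, g (S ω) = Real.log Λ0 + ∑ i, θ i * X ω i := by
    intro ω
    rw [hg, hScox, Real.log_exp, neg_neg, Real.log_mul (ne_of_gt hΛ0) (Real.exp_ne_zero _),
      Real.log_exp]
  -- centered X integrable
  have hXc : ∀ i, Integrable (fun ω => X ω i - μv i) μ :=
    fun i => (hXint i).sub (integrable_const _)
  have hXXc : ∀ i j, Integrable (fun ω => (X ω i - μv i) * (X ω j - μv j)) μ := by
    intro i j
    have : (fun ω => (X ω i - μv i) * (X ω j - μv j))
        = fun ω => X ω i * X ω j - μv i * X ω j - μv j * X ω i + μv i * μv j := by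
      funext ω; ring
    rw [this]
    exact (((hXXint i j).sub ((hXint j).const_mul _)).sub ((hXint i).const_mul _)).add
      (integrable_const _)
  have hXcmean : ∀ i, ∫ ω, (X ω i - μv i) ∂μ = 0 := by
    intro i
    rw [integral_sub (hXint i) (integrable_const _), integral_const, probReal_univ,
      one_smul, ← hμv, sub_self]
  -- c = Sig *ᵥ θ
  have hcS : c = Sig *ᵥ θ := by
    funext i
    rw [hc]
    have hE : (∫ ω', g (S ω') ∂μ) = Real.log Λ0 + ∑ j, θ j * μv j := by
      have : (fun ω' => g (S ω')) = fun ω' => Real.log Λ0 + ∑ j, θ j * X ω' j := by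
        funext ω'; exact hgS ω'
      rw [this, integral_add (integrable_const _)
        (integrable_finset_sum _ (fun j _ => (hXint j).const_mul _)),
        integral_const, probReal_univ, one_smul,
        integral_finset_sum _ (fun j _ => (hXint j).const_mul _)]
      congr 1
      exact Finset.sum_congr rfl fun j _ => by rw [integral_const_mul, ← hμv]
    have hfun : (fun ω => (g (S ω) - ∫ ω', g (S ω') ∂μ) * (X ω i - μv i))
        = fun ω => ∑ j, θ j * ((X ω j - μv j) * (X ω i - μv i)) := by
      funext ω
      rw [hgS, hE]
      rw [show Real.log Λ0 + ∑ j, θ j * X ω j - (Real.log Λ0 + ∑ j, θ j * μv j)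
        = ∑ j, θ j * (X ω j - μv j) by simp only [mul_sub, Finset.sum_sub_distrib]; ring,
        Finset.sum_mul]
      exact Finset.sum_congr rfl fun j _ => by ring
    rw [hfun, integral_finset_sum _ (fun j _ => ((hXXc j i).const_mul _))]
    simp only [integral_const_mul]
    rw [Matrix.mulVec, dotProduct]
    refine Finset.sum_congr rfl fun j _ => ?_
    rw [hSig]
    have : (∫ ω, (X ω i - μv i) * (X ω j - μv j) ∂μ)
        = ∫ ω, (X ω j - μv j) * (X ω i - μv i) ∂μ := by
      congr 1; funext ω; ring
    rw [this]; ring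
  rw [hcS, Matrix.mulVec_mulVec, Matrix.nonsing_inv_mul _ hSiginv, Matrix.one_mulVec]
end

section
/- Under the conditional independence of T and C given X, and positivity K_C(t|X) = P(C > t | X) > 0 for t ≤ τ, the inverse-probability-of-censoring-weighting identity holds: E[ Δ I(T̃ ≤ τ) φ(T, X) / K_C(T̃ | X) | X ] = E[ I(T ≤ τ) φ(T, X) | X ] for any bounded measurable function φ, where T̃ = min(T, C) and Δ = I(T ≤ C). -/
open MeasureTheory ProbabilityTheory

/-- IPCW identity, working conditionally on X: if the survival time T and the
censoring time C are independent (conditionally on X), K_C(t) = P(C > t) > ε > 0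
for t ≤ τ, C is continuous (P(C ≥ t) = P(C > t)), and φ is bounded measurable,
then E[ Δ I(T̃ ≤ τ) φ(T) / K_C(T̃) ] = E[ I(T ≤ τ) φ(T) ],
where T̃ = min(T, C), Δ = I(T ≤ C). -/
theorem stmt_13 {Ω : Type*} [MeasurableSpace Ω] (μ : Measure Ω) [IsProbabilityMeasure μ]
    (T C : Ω → ℝ) (hT : Measurable T) (hC : Measurable C)
    (hindep : IndepFun T C μ)
    (K : ℝ → ℝ) (hK : ∀ t, K t = (μ {ω | t < C ω}).toReal)
    (τ ε : ℝ) (hε : 0 < ε) (hKε : ∀ t ≤ τ, ε < K t)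
    (hCcont : ∀ t : ℝ, μ {ω | C ω = t} = 0)
    (φ : ℝ → ℝ) (hφm : Measurable φ) (B : ℝ) (hφB : ∀ x, |φ x| ≤ B) :
    ∫ ω, (if T ω ≤ C ω ∧ min (T ω) (C ω) ≤ τ
            then φ (T ω) / K (min (T ω) (C ω)) else 0) ∂μ
      = ∫ ω, (if T ω ≤ τ then φ (T ω) else 0) ∂μ := by
  have hB0 : 0 ≤ B := le_trans (abs_nonneg _) (hφB 0)
  -- K is antitone, hence measurable
  have hKanti : Antitone K := by
    intro a b hab
    rw [hK, hK]
    exact ENNReal.toReal_mono (measure_ne_top μ _)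
      (measure_mono (fun ω hω => lt_of_le_of_lt hab hω))
  have hKmeas : Measurable K := hKanti.measurable
  set g : ℝ → ℝ := fun t => if t ≤ τ then φ t / K t else 0 with hg_def
  have hgmeas : Measurable g := Measurable.ite (measurableSet_le measurable_id measurable_const)
    (hφm.div hKmeas) measurable_const
  have hgbound : ∀ t, |g t| ≤ B / ε := by
    intro t
    by_cases ht : t ≤ τ
    · have hKt : 0 < K t := lt_trans hε (hKε t ht)
      simp only [hg_def, if_pos ht, abs_div, abs_of_pos hKt]
      exact div_le_div₀ hB0 (hφB t) hε (le_of_lt (hKε t ht))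
    · simp only [hg_def, if_neg ht, abs_zero]
      positivity
  set F : ℝ × ℝ → ℝ := fun p => if p.1 ≤ p.2 then g p.1 else 0 with hF_def
  have hFmeas : Measurable F := Measurable.ite
    (measurableSet_le measurable_fst measurable_snd)
    (hgmeas.comp measurable_fst) measurable_const
  have hFbound : ∀ p, ‖F p‖ ≤ B / ε := by
    intro p
    by_cases hp : p.1 ≤ p.2
    · simpa [hF_def, hp] using hgbound p.1
    · simp only [hF_def, if_neg hp, norm_zero]
      positivity
  -- rewrite LHS integrand
  have hLHS_eq : ∀ ω, (if T ω ≤ C ω ∧ min (T ω) (C ω) ≤ τ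
      then φ (T ω) / K (min (T ω) (C ω)) else 0) = F (T ω, C ω) := by
    intro ω
    by_cases h1 : T ω ≤ C ω
    · simp [hF_def, hg_def, h1, min_eq_left h1]
    · simp [hF_def, h1]
  set ν := μ.map T with hν
  set ρ := μ.map C with hρ
  haveI : IsProbabilityMeasure ν := Measure.isProbabilityMeasure_map hT.aemeasurable
  haveI : IsProbabilityMeasure ρ := Measure.isProbabilityMeasure_map hC.aemeasurable
  have hmap : μ.map (fun ω => (T ω, C ω)) = ν.prod ρ :=
    (indepFun_iff_map_prod_eq_prod_map_map hT.aemeasurable hC.aemeasurable).mp hindep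
  have hρIoi : ∀ t, ρ (Set.Ioi t) = ENNReal.ofReal (K t) := by
    intro t
    rw [hρ, Measure.map_apply hC measurableSet_Ioi, hK]
    have : {ω | t < C ω} = C ⁻¹' Set.Ioi t := rfl
    rw [this, ENNReal.ofReal_toReal (measure_ne_top μ _)]
  have hρIci : ∀ t, (ρ (Set.Ici t)).toReal = K t := by
    intro t
    have hsing : ρ {t} = 0 := by
      rw [hρ, Measure.map_apply hC (measurableSet_singleton t)]
      have : C ⁻¹' {t} = {ω | C ω = t} := rfl
      rw [this]; exact hCcont t
    have hIci : Set.Ici t = {t} ∪ Set.Ioi t := by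
      ext x; simp [Set.mem_Ici, le_iff_lt_or_eq, or_comm, eq_comm]
    have hu : ρ ({t} ∪ Set.Ioi t) = ρ (Set.Ioi t) :=
      le_antisymm ((measure_union_le _ _).trans (by rw [hsing, zero_add]))
        (measure_mono Set.subset_union_right)
    rw [hIci, hu, hρIoi, ENNReal.toReal_ofReal]
    rw [hK]; exact ENNReal.toReal_nonneg
  -- integral transformations
  calc ∫ ω, (if T ω ≤ C ω ∧ min (T ω) (C ω) ≤ τ
            then φ (T ω) / K (min (T ω) (C ω)) else 0) ∂μ
      = ∫ ω, F (T ω, C ω) ∂μ := by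
        exact integral_congr_ae (Filter.Eventually.of_forall hLHS_eq)
    _ = ∫ p, F p ∂(ν.prod ρ) := by
        rw [← hmap, integral_map (hT.prodMk hC).aemeasurable hFmeas.aestronglyMeasurable]
    _ = ∫ t, ∫ c, F (t, c) ∂ρ ∂ν := by
        apply integral_prod
        exact (integrable_const (B / ε)).mono' hFmeas.aestronglyMeasurable
          (Filter.Eventually.of_forall hFbound)
    _ = ∫ t, g t * K t ∂ν := by
        apply integral_congr_ae (Filter.Eventually.of_forall ?_)
        intro t
        have : (fun c => F (t, c)) = Set.indicator (Set.Ici t) (fun _ => g t) := by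
          ext c
          by_cases hc : t ≤ c
          · simp [hF_def, hc, Set.indicator_of_mem, Set.mem_Ici.mpr hc]
          · simp [hF_def, hc, Set.indicator_of_notMem, fun h => hc (Set.mem_Ici.mp h)]
        rw [this, integral_indicator_const _ measurableSet_Ici, measureReal_def, hρIci, smul_eq_mul, mul_comm]
    _ = ∫ t, (if t ≤ τ then φ t else 0) ∂ν := by
        apply integral_congr_ae (Filter.Eventually.of_forall ?_)
        intro t
        by_cases ht : t ≤ τ
        · have hKt : K t ≠ 0 := ne_of_gt (lt_trans hε (hKε t ht))
          simp [hg_def, ht, div_mul_cancel₀ _ hKt]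
        · simp [hg_def, ht]
    _ = ∫ ω, (if T ω ≤ τ then φ (T ω) else 0) ∂μ := by
        rw [hν, integral_map hT.aemeasurable]
        exact (Measurable.ite (measurableSet_le measurable_id measurable_const)
          hφm measurable_const).aestronglyMeasurable
end

section
/- Let (T1, Y1) and (T2, Y2) be i.i.d. and let C1, C2 be i.i.d. censoring times independent of all (T_j, Y_j), with continuous survival function G(t) = P(C > t) satisfying G(τ) > 0. With T̃_j = min(T_j, C_j) and Δ1 = I(T1 ≤ C1), the Uno-type IPCW identity holds: E[ Δ1 · I(T̃1 < T̃2) · I(T1 ≤ τ) · I(Y1 > Y2) / G(T̃1)² ] = P(T1 < T2, T1 ≤ τ, Y1 > Y2). -/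
open MeasureTheory ProbabilityTheory
open scoped ENNReal

/-- Uno-type IPCW identity: for i.i.d. pairs (T1,Y1), (T2,Y2) and i.i.d. continuous
censoring times C1, C2 independent of the pairs, with G(t) = P(C > t), G(τ) > 0,
T̃_j = min(T_j, C_j), Δ1 = I(T1 ≤ C1):
E[ Δ1 I(T̃1 < T̃2) I(T1 ≤ τ) I(Y1 > Y2) / G(T̃1)² ] = P(T1 < T2, T1 ≤ τ, Y1 > Y2). -/
theorem stmt_14 {Ω : Type*} [MeasurableSpace Ω] (μ : Measure Ω) [IsProbabilityMeasure μ]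
    (T1 Y1 T2 Y2 C1 C2 : Ω → ℝ)
    (hT1 : Measurable T1) (hY1 : Measurable Y1)
    (hT2 : Measurable T2) (hY2 : Measurable Y2)
    (hC1 : Measurable C1) (hC2 : Measurable C2)
    (hpairindep : IndepFun (fun ω => (T1 ω, Y1 ω)) (fun ω => (T2 ω, Y2 ω)) μ)
    (hpairid : μ.map (fun ω => (T1 ω, Y1 ω)) = μ.map (fun ω => (T2 ω, Y2 ω)))
    (hCindep : IndepFun (fun ω => ((T1 ω, Y1 ω), (T2 ω, Y2 ω)))
                        (fun ω => (C1 ω, C2 ω)) μ)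
    (hC12indep : IndepFun C1 C2 μ)
    (hC12id : μ.map C1 = μ.map C2)
    (hCcont : ∀ t : ℝ, μ {ω | C1 ω = t} = 0)
    (hTcont : ∀ t : ℝ, μ {ω | T1 ω = t} = 0)
    (G : ℝ → ℝ) (hG : ∀ t, G t = (μ {ω | t < C1 ω}).toReal)
    (τ : ℝ) (hτ : 0 < τ) (hGτ : 0 < G τ) :
    ∫ ω, (if T1 ω ≤ C1 ω ∧ min (T1 ω) (C1 ω) < min (T2 ω) (C2 ω)
              ∧ T1 ω ≤ τ ∧ Y2 ω < Y1 ω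
            then 1 / (G (min (T1 ω) (C1 ω))) ^ 2 else 0) ∂μ
      = (μ {ω | T1 ω < T2 ω ∧ T1 ω ≤ τ ∧ Y2 ω < Y1 ω}).toReal := by
  classical
  set X : Ω → (ℝ × ℝ) × (ℝ × ℝ) := fun ω => ((T1 ω, Y1 ω), (T2 ω, Y2 ω)) with hXdef
  set Cp : Ω → ℝ × ℝ := fun ω => (C1 ω, C2 ω) with hCpdef
  have hX : Measurable X := (hT1.prodMk hY1).prodMk (hT2.prodMk hY2)
  have hCp : Measurable Cp := hC1.prodMk hC2
  set ν : Measure ℝ := μ.map C1 with hνdef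
  set μX : Measure ((ℝ × ℝ) × (ℝ × ℝ)) := μ.map X with hμXdef
  have hνprob : IsProbabilityMeasure ν := Measure.isProbabilityMeasure_map hC1.aemeasurable
  have hμXprob : IsProbabilityMeasure μX := Measure.isProbabilityMeasure_map hX.aemeasurable
  -- G facts
  have hGanti : Antitone G := by
    intro s t hst
    rw [hG, hG]
    exact ENNReal.toReal_mono (measure_ne_top μ _)
      (measure_mono fun ω hω => lt_of_le_of_lt hst hω)
  have hGmeas : Measurable G := hGanti.measurable
  have hGnonneg : ∀ t, 0 ≤ G t := fun t => by rw [hG]; exact ENNReal.toReal_nonneg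
  -- law of C1 facts
  have hνlt : ∀ t : ℝ, ν {c | t < c} = ENNReal.ofReal (G t) := by
    intro t
    have h1 : ν {c | t < c} = μ (C1 ⁻¹' {c | t < c}) :=
      Measure.map_apply hC1 (by exact measurableSet_Ioi)
    have h2 : μ (C1 ⁻¹' {c | t < c}) = μ {ω | t < C1 ω} := rfl
    rw [h1, h2, hG, ENNReal.ofReal_toReal (measure_ne_top μ _)]
  have hνle : ∀ t : ℝ, ν {c | t ≤ c} = ENNReal.ofReal (G t) := by
    intro t
    have h0 : ν {c | c = t} = 0 := by
      have h1 : ν {c | c = t} = μ (C1 ⁻¹' {c | c = t}) := by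
        refine Measure.map_apply hC1 ?_
        have : ({c | c = t} : Set ℝ) = {t} := by ext c; simp
        rw [this]; exact measurableSet_singleton t
      have h2 : μ (C1 ⁻¹' {c | c = t}) = μ {ω | C1 ω = t} := rfl
      rw [h1, h2, hCcont]
    refine le_antisymm ?_ ?_
    · calc ν {c | t ≤ c} ≤ ν ({c | t < c} ∪ {c | c = t}) := by
            apply measure_mono; intro c hc
            rcases lt_or_eq_of_le (show t ≤ c from hc) with h | h
            · exact Or.inl h
            · exact Or.inr h.symm
        _ ≤ ν {c | t < c} + ν {c | c = t} := measure_union_le _ _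
        _ = ENNReal.ofReal (G t) := by rw [h0, add_zero, hνlt]
    · rw [← hνlt]; exact measure_mono fun c hc => show t ≤ c from le_of_lt (show t < c from hc)
  -- joint laws
  have hlawC : μ.map Cp = ν.prod ν := by
    have h := (indepFun_iff_map_prod_eq_prod_map_map hC1.aemeasurable
      hC2.aemeasurable).mp hC12indep
    rw [hCpdef, h, ← hC12id]
  have hlawXC : μ.map (fun ω => (X ω, Cp ω)) = μX.prod (ν.prod ν) := by
    have h := (indepFun_iff_map_prod_eq_prod_map_map hX.aemeasurable
      hCp.aemeasurable).mp hCindep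
    rw [h, hlawC]
  -- the integrand
  set fR : ((ℝ × ℝ) × (ℝ × ℝ)) × (ℝ × ℝ) → ℝ := fun p =>
    if p.1.1.1 ≤ p.2.1 ∧ min p.1.1.1 p.2.1 < min p.1.2.1 p.2.2 ∧ p.1.1.1 ≤ τ ∧ p.1.2.2 < p.1.1.2
    then 1 / (G (min p.1.1.1 p.2.1)) ^ 2 else 0 with hfRdef
  have hcondmeas : MeasurableSet {p : ((ℝ × ℝ) × (ℝ × ℝ)) × (ℝ × ℝ) |
      p.1.1.1 ≤ p.2.1 ∧ min p.1.1.1 p.2.1 < min p.1.2.1 p.2.2 ∧ p.1.1.1 ≤ τ ∧ p.1.2.2 < p.1.1.2} := by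
    have m1 : Measurable fun p : ((ℝ × ℝ) × (ℝ × ℝ)) × (ℝ × ℝ) => p.1.1.1 :=
      measurable_fst.fst.fst
    have m2 : Measurable fun p : ((ℝ × ℝ) × (ℝ × ℝ)) × (ℝ × ℝ) => p.2.1 :=
      measurable_snd.fst
    have m3 : Measurable fun p : ((ℝ × ℝ) × (ℝ × ℝ)) × (ℝ × ℝ) => p.1.2.1 :=
      measurable_fst.snd.fst
    have m4 : Measurable fun p : ((ℝ × ℝ) × (ℝ × ℝ)) × (ℝ × ℝ) => p.2.2 :=
      measurable_snd.snd
    have m5 : Measurable fun p : ((ℝ × ℝ) × (ℝ × ℝ)) × (ℝ × ℝ) => p.1.1.2 :=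
      measurable_fst.fst.snd
    have m6 : Measurable fun p : ((ℝ × ℝ) × (ℝ × ℝ)) × (ℝ × ℝ) => p.1.2.2 :=
      measurable_fst.snd.snd
    exact (measurableSet_le m1 m2).inter
      ((measurableSet_lt (m1.min m2) (m3.min m4)).inter
        ((measurableSet_le m1 measurable_const).inter (measurableSet_lt m6 m5)))
  have hfR : Measurable fR := by
    apply Measurable.ite hcondmeas
    · exact measurable_const.div ((hGmeas.comp
        (measurable_fst.fst.fst.min measurable_snd.fst)).pow measurable_const)
    · exact measurable_const
  have hfRnonneg : ∀ p, 0 ≤ fR p := by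
    intro p; rw [hfRdef]; dsimp only
    split_ifs with h
    · positivity
    · exact le_refl 0
  set g : ((ℝ × ℝ) × (ℝ × ℝ)) × (ℝ × ℝ) → ℝ≥0∞ := fun p => ENNReal.ofReal (fR p) with hgdef
  have hg : Measurable g := ENNReal.measurable_ofReal.comp hfR
  -- inner integral over the censoring law
  have inner : ∀ t1 y1 t2 y2 : ℝ,
      ∫⁻ c, g (((t1, y1), (t2, y2)), c) ∂(ν.prod ν)
        = if t1 < t2 ∧ t1 ≤ τ ∧ y2 < y1 then 1 else 0 := by
    intro t1 y1 t2 y2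
    have hs1 : MeasurableSet {c1 : ℝ | t1 ≤ c1} := by exact measurableSet_Ici
    have hs2 : MeasurableSet {c2 : ℝ | t1 < c2} := by exact measurableSet_Ioi
    have heq : (fun c : ℝ × ℝ => g (((t1, y1), (t2, y2)), c))
        = Set.indicator ({c1 : ℝ | t1 ≤ c1} ×ˢ {c2 : ℝ | t1 < c2})
            (fun _ => if t1 < t2 ∧ t1 ≤ τ ∧ y2 < y1
              then ENNReal.ofReal (1 / (G t1) ^ 2) else 0) := by
      funext c
      by_cases hc : c ∈ ({c1 : ℝ | t1 ≤ c1} ×ˢ {c2 : ℝ | t1 < c2} : Set (ℝ × ℝ))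
      · rw [Set.indicator_of_mem hc]
        obtain ⟨h1, h2⟩ := hc
        simp only [hgdef, hfRdef]
        rw [min_eq_left h1]
        by_cases hP : t1 < t2 ∧ t1 ≤ τ ∧ y2 < y1
        · rw [if_pos ⟨h1, lt_min_iff.mpr ⟨hP.1, h2⟩, hP.2⟩, if_pos hP]
        · rw [if_neg ?_, if_neg hP, ENNReal.ofReal_zero]
          rintro ⟨-, hlt, hrest⟩
          exact hP ⟨(lt_min_iff.mp hlt).1, hrest⟩
      · rw [Set.indicator_of_notMem hc]
        simp only [hgdef, hfRdef]
        rw [if_neg ?_, ENNReal.ofReal_zero]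
        rintro ⟨h1, h2, -⟩
        rw [min_eq_left h1] at h2
        exact hc ⟨h1, lt_of_lt_of_le h2 (min_le_right _ _)⟩
    rw [heq, lintegral_indicator_const (hs1.prod hs2), Measure.prod_prod, hνle t1, hνlt t1]
    by_cases hP : t1 < t2 ∧ t1 ≤ τ ∧ y2 < y1
    · rw [if_pos hP, if_pos hP]
      have hGt1 : 0 < G t1 := lt_of_lt_of_le hGτ (hGanti hP.2.1)
      rw [← ENNReal.ofReal_mul (hGnonneg t1),
        ← ENNReal.ofReal_mul (by positivity : (0:ℝ) ≤ 1 / G t1 ^ 2)]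
      have hone : 1 / G t1 ^ 2 * (G t1 * G t1) = 1 := by
        field_simp
      rw [hone, ENNReal.ofReal_one]
    · rw [if_neg hP, if_neg hP, zero_mul]
  -- target set in the pair space
  have hS : MeasurableSet {x : (ℝ × ℝ) × (ℝ × ℝ) | x.1.1 < x.2.1 ∧ x.1.1 ≤ τ ∧ x.2.2 < x.1.2} :=
    (measurableSet_lt measurable_fst.fst measurable_snd.fst).inter
      ((measurableSet_le measurable_fst.fst measurable_const).inter
        (measurableSet_lt measurable_snd.snd measurable_fst.snd))
  have key : ∫⁻ ω, g (X ω, Cp ω) ∂μ = μ {ω | T1 ω < T2 ω ∧ T1 ω ≤ τ ∧ Y2 ω < Y1 ω} := by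
    rw [← lintegral_map hg (hX.prodMk hCp), hlawXC, lintegral_prod _ hg.aemeasurable]
    have hpt : (fun x : (ℝ × ℝ) × (ℝ × ℝ) => ∫⁻ c, g (x, c) ∂(ν.prod ν))
        = fun x => Set.indicator
            {x : (ℝ × ℝ) × (ℝ × ℝ) | x.1.1 < x.2.1 ∧ x.1.1 ≤ τ ∧ x.2.2 < x.1.2} 1 x := by
      funext x
      rcases x with ⟨⟨t1, y1⟩, ⟨t2, y2⟩⟩
      rw [inner t1 y1 t2 y2]
      simp [Set.indicator_apply]
    rw [hpt, lintegral_indicator_one hS, hμXdef, Measure.map_apply hX hS]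
    rfl
  have hmain : ∫ ω, fR (X ω, Cp ω) ∂μ
      = (μ {ω | T1 ω < T2 ω ∧ T1 ω ≤ τ ∧ Y2 ω < Y1 ω}).toReal := by
    rw [integral_eq_lintegral_of_nonneg_ae
      (Filter.Eventually.of_forall fun ω => hfRnonneg _)
      (hfR.comp (hX.prodMk hCp)).aestronglyMeasurable]
    exact congrArg ENNReal.toReal key
  exact hmain
end
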